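/- Let V be an ℝ-linear subspace of ℝⁿ and Γ a discrete additive subgroup of ℝⁿ such that V ∩ span_ℝ(Γ) = {0}. Then the set V + Γ = {v + γ : v ∈ V, γ ∈ Γ} is closed in ℝⁿ. -/

import Mathlib

open Pointwise

/-- The sum of a linear subspace `V` of `ℝⁿ` and a discrete additive subgroup
`Γ` with `V ∩ span ℝ Γ = {0}` is a closed subset of `ℝⁿ`. -/
theorem isClosed_subspace_add_discrete (n : ℕ) (V : Submodule ℝ (Fin n → ℝ))
    (Γ : AddSubgroup (Fin n → ℝ)) (hΓ : DiscreteTopology Γ)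
    (htrans : V ⊓ Submodule.span ℝ (Γ : Set (Fin n → ℝ)) = ⊥) :
    IsClosed ((V : Set (Fin n → ℝ)) + (Γ : Set (Fin n → ℝ))) := by
  set W := Submodule.span ℝ (Γ : Set (Fin n → ℝ)) with hW
  -- extend W to a complement U of V
  obtain ⟨U₀, hU₀⟩ := (V ⊔ W).exists_isCompl
  set U := W ⊔ U₀ with hUdef
  have h1 : U ⊓ (V ⊔ W) = W := by
    rw [hUdef, sup_inf_assoc_of_le U₀ (le_sup_right : W ≤ V ⊔ W), inf_comm U₀,
      disjoint_iff.mp hU₀.disjoint, sup_bot_eq]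
  have hVU : IsCompl V U := by
    constructor
    · rw [disjoint_iff]
      calc V ⊓ U = V ⊓ (V ⊔ W) ⊓ U := by rw [inf_eq_left.mpr (le_sup_left : V ≤ V ⊔ W)]
        _ = V ⊓ (U ⊓ (V ⊔ W)) := by rw [inf_assoc, inf_comm (V ⊔ W) U]
        _ = V ⊓ W := by rw [h1]
        _ = ⊥ := htrans
    · rw [codisjoint_iff, hUdef, ← sup_assoc]
      exact codisjoint_iff.mp hU₀.codisjoint
  -- projection onto U with kernel V
  let π : (Fin n → ℝ) →ₗ[ℝ] (Fin n → ℝ) := U.subtype ∘ₗ U.projectionOnto V hVU.symm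
  have hπcont : Continuous π := π.continuous_of_finiteDimensional
  have hΓU : ∀ x ∈ Γ, x ∈ U := fun x hx =>
    le_sup_left (a := W) (Submodule.subset_span hx)
  have hΓclosed : IsClosed (Γ : Set (Fin n → ℝ)) := AddSubgroup.isClosed_of_discrete
  have hπV : ∀ v ∈ V, π v = 0 := fun v hv => by
    simp [π, Submodule.projectionOnto_apply_of_mem_right hVU.symm hv]
  have hπU : ∀ u ∈ U, π u = u := fun u hu => by
    simpa [π] using congrArg Subtype.val
      (Submodule.projectionOnto_apply_left hVU.symm ⟨u, hu⟩)
  have key : (V : Set (Fin n → ℝ)) + (Γ : Set (Fin n → ℝ)) = π ⁻¹' (Γ : Set (Fin n → ℝ)) := by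
    ext x
    constructor
    · rintro ⟨v, hv, γ, hγ, rfl⟩
      have : π (v + γ) = γ := by
        rw [map_add, hπV v hv, hπU γ (hΓU γ hγ), zero_add]
      simpa [Set.mem_preimage, this] using hγ
    · intro hx
      refine ⟨x - π x, ?_, π x, hx, by simp⟩
      have hπxU : π x ∈ U := (U.projectionOnto V hVU.symm x).2
      have h0 : π (x - π x) = 0 := by rw [map_sub, hπU (π x) hπxU, sub_self]
      have : U.projectionOnto V hVU.symm (x - π x) = 0 := by
        simp only [π, LinearMap.comp_apply, Submodule.subtype_apply,
          Submodule.coe_eq_zero] at h0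
        exact h0
      exact (Submodule.projectionOnto_apply_eq_zero_iff hVU.symm).mp this
  rw [key]
  exact hΓclosed.preimage hπcont
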